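/- On a flat torus T = ℝ²/Λ whose fundamental domain is a non-rectangular parallelogram, for every point x the set of points at maximal distance ρ(x,·) on T consists of exactly two points. -/

import Mathlib

/-- The Euclidean norm on `ℝ × ℝ`. -/
noncomputable def enorm2 (v : ℝ × ℝ) : ℝ := Real.sqrt (v.1 ^ 2 + v.2 ^ 2)

/-- The Euclidean dot product on `ℝ × ℝ`. -/
def dot2 (v w : ℝ × ℝ) : ℝ := v.1 * w.1 + v.2 * w.2

/-- The flat quotient metric of the torus `ℝ²/Λ`, computed on representatives:
`ρ([x],[y]) = inf_{λ ∈ Λ} |x - y - λ|`. -/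
noncomputable def torusDist (Λ : AddSubgroup (ℝ × ℝ)) (x y : ℝ × ℝ) : ℝ :=
  ⨅ l : Λ, enorm2 (x - y - (l : ℝ × ℝ))

namespace TorusFar

def N2 (v : ℝ × ℝ) : ℝ := v.1 ^ 2 + v.2 ^ 2

def cr (v w : ℝ × ℝ) : ℝ := v.1 * w.2 - v.2 * w.1

lemma N2_nonneg (v : ℝ × ℝ) : 0 ≤ N2 v := by
  have := sq_nonneg v.1; have := sq_nonneg v.2; unfold N2; linarith

lemma N2_eq_zero {v : ℝ × ℝ} (h : N2 v = 0) : v = 0 := by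
  unfold N2 at h
  have h1 : v.1 = 0 := by nlinarith [sq_nonneg v.1, sq_nonneg v.2]
  have h2 : v.2 = 0 := by nlinarith [sq_nonneg v.1, sq_nonneg v.2]
  exact Prod.ext h1 h2

lemma N2_pos {v : ℝ × ℝ} (h : v ≠ 0) : 0 < N2 v :=
  lt_of_le_of_ne (N2_nonneg v) (fun h0 => h (N2_eq_zero h0.symm))

lemma enorm2_eq (v : ℝ × ℝ) : enorm2 v = Real.sqrt (N2 v) := rfl

lemma enorm2_nonneg (v : ℝ × ℝ) : 0 ≤ enorm2 v := Real.sqrt_nonneg _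

lemma enorm2_sq (v : ℝ × ℝ) : enorm2 v ^ 2 = N2 v := Real.sq_sqrt (N2_nonneg v)

lemma enorm2_le_enorm2 {v w : ℝ × ℝ} (h : N2 v ≤ N2 w) : enorm2 v ≤ enorm2 w :=
  Real.sqrt_le_sqrt h

lemma sq_le_N2 {v : ℝ × ℝ} {d : ℝ} (hd : 0 ≤ d) (h : d ≤ enorm2 v) : d ^ 2 ≤ N2 v := by
  rw [← enorm2_sq]; exact pow_le_pow_left₀ hd h 2

lemma zsmul_pair (m n : ℤ) (u w : ℝ × ℝ) :
    m • u + n • w = (((m : ℝ) * u.1 + (n : ℝ) * w.1 : ℝ), ((m : ℝ) * u.2 + (n : ℝ) * w.2 : ℝ)) := by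
  ext <;> simp [Prod.smul_fst, Prod.smul_snd, zsmul_eq_mul]

lemma mul_pred_nonneg (m : ℤ) : 0 ≤ (m : ℝ) * ((m : ℝ) - 1) := by
  rcases le_or_gt 1 m with h | h
  · have : (1 : ℝ) ≤ (m : ℝ) := by exact_mod_cast h
    nlinarith
  · have : (m : ℝ) ≤ 0 := by exact_mod_cast (by omega : m ≤ 0)
    nlinarith

lemma intIneq {A B p : ℝ} (hA : 0 < A) (hB : 0 < B) (hp : p < 0)
    (h1 : -2 * p ≤ A) (h2 : -2 * p ≤ B) (m n : ℤ) :
    0 ≤ A * m * ((m : ℝ) - 1) + B * n * ((n : ℝ) - 1) + 2 * p * n * ((m : ℝ) - 1) := by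
  set x : ℝ := (m : ℝ) with hx
  set y : ℝ := (n : ℝ) with hy
  obtain hn | hn | hn | hn : n ≤ -1 ∨ n = 0 ∨ n = 1 ∨ 2 ≤ n := by omega
  · -- n ≤ -1
    have hy1 : y ≤ -1 := by rw [hy]; exact_mod_cast hn
    obtain hm | hm | hm : m = 0 ∨ 1 ≤ m ∨ m ≤ -1 := by omega
    · subst hm
      have hx0 : x = 0 := by simp [hx]
      rw [hx0]
      have hfac : B * (y - 1) - 2 * p ≤ 0 := by nlinarith
      nlinarith [mul_nonneg (by linarith : (0:ℝ) ≤ -y) (by linarith : (0:ℝ) ≤ -(B * (y - 1) - 2 * p))]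
    · have hx1 : 1 ≤ x := by rw [hx]; exact_mod_cast hm
      nlinarith [mul_nonneg (mul_nonneg (by linarith : (0:ℝ) ≤ -2 * p) (by linarith : (0:ℝ) ≤ -y)) (by linarith : (0:ℝ) ≤ x - 1),
        mul_nonneg (mul_nonneg hA.le (by linarith : (0:ℝ) ≤ x)) (by linarith : (0:ℝ) ≤ x - 1),
        mul_nonneg (mul_nonneg hB.le (by linarith : (0:ℝ) ≤ -y)) (by linarith : (0:ℝ) ≤ 1 - y)]
    · have hx1 : x ≤ -1 := by rw [hx]; exact_mod_cast hm
      rcases le_or_gt m n with hmn | hmn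
      · -- x ≤ y ≤ -1 : terms A(y-x)(1-x), (A+2p)(-y)(1-x), By(y-1)
        have hxy : x ≤ y := by rw [hx, hy]; exact_mod_cast hmn
        nlinarith [mul_nonneg (mul_nonneg hA.le (by linarith : (0:ℝ) ≤ y - x)) (by linarith : (0:ℝ) ≤ 1 - x),
          mul_nonneg (mul_nonneg (by linarith : (0:ℝ) ≤ A + 2 * p) (by linarith : (0:ℝ) ≤ -y)) (by linarith : (0:ℝ) ≤ 1 - x),
          mul_nonneg (mul_nonneg hB.le (by linarith : (0:ℝ) ≤ -y)) (by linarith : (0:ℝ) ≤ 1 - y)]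
      · -- y ≤ x - 1 ≤ -2 : terms Ax(x-1), (B+2p)(-y)(1-x), B(-y)(x-y)
        have hxy : y ≤ x - 1 := by rw [hx, hy]; push_cast; exact_mod_cast (by omega : n ≤ m - 1)
        nlinarith [mul_nonneg (mul_nonneg hA.le (by linarith : (0:ℝ) ≤ -x)) (by linarith : (0:ℝ) ≤ 1 - x),
          mul_nonneg (mul_nonneg (by linarith : (0:ℝ) ≤ B + 2 * p) (by linarith : (0:ℝ) ≤ -y)) (by linarith : (0:ℝ) ≤ 1 - x),
          mul_nonneg (mul_nonneg hB.le (by linarith : (0:ℝ) ≤ -y)) (by linarith : (0:ℝ) ≤ x - y)]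
  · subst hn
    have hy0 : y = 0 := by simp [hy]
    rw [hy0]
    nlinarith [mul_pred_nonneg m, hA.le]
  · subst hn
    have hy1 : y = 1 := by simp [hy]
    rw [hy1]
    rcases le_or_gt 1 m with hm | hm
    · have hx1 : 1 ≤ x := by rw [hx]; exact_mod_cast hm
      nlinarith [mul_nonneg (by linarith : (0:ℝ) ≤ x - 1) (by nlinarith : (0:ℝ) ≤ A * x + 2 * p)]
    · have hx1 : x ≤ 0 := by rw [hx]; exact_mod_cast (by omega : m ≤ 0)
      nlinarith [mul_nonneg (by linarith : (0:ℝ) ≤ 1 - x) (by nlinarith : (0:ℝ) ≤ -(A * x) - 2 * p)]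
  · -- 2 ≤ n
    have hy2 : 2 ≤ y := by rw [hy]; exact_mod_cast hn
    obtain hm | hm | hm : m = 0 ∨ 1 ≤ m ∨ m ≤ -1 := by omega
    · subst hm
      have hx0 : x = 0 := by simp [hx]
      rw [hx0]
      nlinarith [mul_pos (by linarith : (0:ℝ) < -2 * p) (by linarith : (0:ℝ) < y),
        mul_nonneg (mul_nonneg hB.le (by linarith : (0:ℝ) ≤ y)) (by linarith : (0:ℝ) ≤ y - 1)]
    · have hx1 : 1 ≤ x := by rw [hx]; exact_mod_cast hm
      rcases le_or_gt m n with hmn | hmn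
      · have hxy : x ≤ y := by rw [hx, hy]; exact_mod_cast hmn
        nlinarith [mul_nonneg (mul_nonneg hA.le (by linarith : (0:ℝ) ≤ x)) (by linarith : (0:ℝ) ≤ x - 1),
          mul_nonneg (mul_nonneg hB.le (by linarith : (0:ℝ) ≤ y)) (by linarith : (0:ℝ) ≤ y - x),
          mul_nonneg (mul_nonneg (by linarith : (0:ℝ) ≤ B + 2 * p) (by linarith : (0:ℝ) ≤ y)) (by linarith : (0:ℝ) ≤ x - 1)]
      · have hxy : y ≤ x - 1 := by rw [hx, hy]; push_cast; exact_mod_cast (by omega : n ≤ m - 1)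
        nlinarith [mul_nonneg (mul_nonneg hA.le (by linarith : (0:ℝ) ≤ x - y)) (by linarith : (0:ℝ) ≤ x - 1),
          mul_nonneg (mul_nonneg (by linarith : (0:ℝ) ≤ A + 2 * p) (by linarith : (0:ℝ) ≤ y)) (by linarith : (0:ℝ) ≤ x - 1),
          mul_nonneg (mul_nonneg hB.le (by linarith : (0:ℝ) ≤ y)) (by linarith : (0:ℝ) ≤ y - 1)]
    · have hx1 : x ≤ -1 := by rw [hx]; exact_mod_cast hm
      nlinarith [mul_nonneg (mul_nonneg (by linarith : (0:ℝ) ≤ -2 * p) (by linarith : (0:ℝ) ≤ y)) (by linarith : (0:ℝ) ≤ 1 - x),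
        mul_nonneg (mul_nonneg hA.le (by linarith : (0:ℝ) ≤ -x)) (by linarith : (0:ℝ) ≤ 1 - x),
        mul_nonneg (mul_nonneg hB.le (by linarith : (0:ℝ) ≤ y)) (by linarith : (0:ℝ) ≤ y - 1)]


lemma N2_neg (v : ℝ × ℝ) : N2 (-v) = N2 v := by
  simp [N2]

noncomputable def gd (Λ : AddSubgroup (ℝ × ℝ)) (v : ℝ × ℝ) : ℝ :=
  ⨅ l : Λ, enorm2 (v - (l : ℝ × ℝ))

lemma torusDist_eq (Λ : AddSubgroup (ℝ × ℝ)) (x y : ℝ × ℝ) :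
    torusDist Λ x y = gd Λ (x - y) := rfl

lemma gd_le {Λ : AddSubgroup (ℝ × ℝ)} {l : ℝ × ℝ} (hl : l ∈ Λ) (v : ℝ × ℝ) :
    gd Λ v ≤ enorm2 (v - l) := by
  haveI : Nonempty Λ := ⟨0⟩
  exact ciInf_le ⟨0, by rintro r ⟨q, rfl⟩; exact enorm2_nonneg _⟩ (⟨l, hl⟩ : Λ)

lemma le_gd {Λ : AddSubgroup (ℝ × ℝ)} {v : ℝ × ℝ} {d : ℝ}
    (h : ∀ l ∈ Λ, d ≤ enorm2 (v - l)) : d ≤ gd Λ v := by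
  haveI : Nonempty Λ := ⟨0⟩
  exact le_ciInf fun l => h l l.2

lemma bary (u w cc : ℝ × ℝ) (s t : ℝ)
    (h1 : 2 * dot2 cc u = N2 u) (h2 : 2 * dot2 cc w = N2 w + 2 * dot2 u w)
    (v' : ℝ × ℝ) (hv' : v' = (s * u.1 + t * w.1, s * u.2 + t * w.2)) :
    (1 - s) * N2 v' + (s - t) * N2 (v' - u) + t * N2 (v' - (u + w))
      = N2 cc - N2 (v' - cc) := by
  subst hv'
  simp only [N2, dot2, Prod.fst_sub, Prod.snd_sub, Prod.fst_add, Prod.snd_add] at *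
  linear_combination (-s) * h1 + (-t) * h2

/-- The triangle lemma: if `v - q0` lies in the closed triangle with vertices
`0, u, u+w` and `cc` is the circumcenter of that triangle, then the lattice
distance from `v` is at most `enorm2 cc`, with equality only at the circumcenter. -/
lemma tri {Λ : AddSubgroup (ℝ × ℝ)} {u w cc : ℝ × ℝ} (hu : u ∈ Λ) (hw : w ∈ Λ)
    (h1 : 2 * dot2 cc u = N2 u) (h2 : 2 * dot2 cc w = N2 w + 2 * dot2 u w)
    {v q0 : ℝ × ℝ} (hq0 : q0 ∈ Λ) {s t : ℝ} (ht0 : 0 ≤ t) (hts : t ≤ s) (hs1 : s ≤ 1)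
    (hv' : v - q0 = (s * u.1 + t * w.1, s * u.2 + t * w.2)) :
    gd Λ v ≤ enorm2 cc ∧
      ((∀ l ∈ Λ, enorm2 cc ≤ enorm2 (v - l)) → v - cc ∈ Λ) := by
  have hsum := bary u w cc s t h1 h2 (v - q0) hv'
  have hl1 : q0 + u ∈ Λ := add_mem hq0 hu
  have hl2 : q0 + (u + w) ∈ Λ := add_mem hq0 (add_mem hu hw)
  have hsub1 : v - (q0 + u) = (v - q0) - u := by abel
  have hsub2 : v - (q0 + (u + w)) = (v - q0) - (u + w) := by abel
  constructor
  · -- upper bound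
    have hmin : N2 (v - q0) ≤ N2 cc ∨ N2 ((v - q0) - u) ≤ N2 cc ∨
        N2 ((v - q0) - (u + w)) ≤ N2 cc := by
      by_contra hcon
      push_neg at hcon
      obtain ⟨k1, k2, k3⟩ := hcon
      have p1 : (1 - s) * N2 cc ≤ (1 - s) * N2 (v - q0) :=
        mul_le_mul_of_nonneg_left k1.le (by linarith)
      have p2 : (s - t) * N2 cc ≤ (s - t) * N2 ((v - q0) - u) :=
        mul_le_mul_of_nonneg_left k2.le (by linarith)
      have p3 : t * N2 cc ≤ t * N2 ((v - q0) - (u + w)) :=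
        mul_le_mul_of_nonneg_left k3.le ht0
      have hδ : N2 ((v - q0) - cc) ≤ 0 := by nlinarith
      have hvc : v - q0 = cc := by
        have := N2_eq_zero (le_antisymm hδ (N2_nonneg _))
        rwa [sub_eq_zero] at this
      rw [hvc] at k1
      exact lt_irrefl _ k1
    rcases hmin with h | h | h
    · calc gd Λ v ≤ enorm2 (v - q0) := gd_le hq0 v
        _ ≤ enorm2 cc := enorm2_le_enorm2 h
    · calc gd Λ v ≤ enorm2 (v - (q0 + u)) := gd_le hl1 v
        _ ≤ enorm2 cc := by rw [hsub1]; exact enorm2_le_enorm2 h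
    · calc gd Λ v ≤ enorm2 (v - (q0 + (u + w))) := gd_le hl2 v
        _ ≤ enorm2 cc := by rw [hsub2]; exact enorm2_le_enorm2 h
  · -- equality case
    intro hall
    have e0 : N2 cc ≤ N2 (v - q0) := by
      have := sq_le_N2 (enorm2_nonneg cc) (hall q0 hq0)
      rwa [enorm2_sq] at this
    have e1 : N2 cc ≤ N2 ((v - q0) - u) := by
      have := sq_le_N2 (enorm2_nonneg cc) (hall _ hl1)
      rwa [enorm2_sq, hsub1] at this
    have e2 : N2 cc ≤ N2 ((v - q0) - (u + w)) := by
      have := sq_le_N2 (enorm2_nonneg cc) (hall _ hl2)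
      rwa [enorm2_sq, hsub2] at this
    have p1 : (1 - s) * N2 cc ≤ (1 - s) * N2 (v - q0) :=
      mul_le_mul_of_nonneg_left e0 (by linarith)
    have p2 : (s - t) * N2 cc ≤ (s - t) * N2 ((v - q0) - u) :=
      mul_le_mul_of_nonneg_left e1 (by linarith)
    have p3 : t * N2 cc ≤ t * N2 ((v - q0) - (u + w)) :=
      mul_le_mul_of_nonneg_left e2 ht0
    have hδ : N2 ((v - q0) - cc) ≤ 0 := by nlinarith
    have hvc : v - q0 = cc := by
      have := N2_eq_zero (le_antisymm hδ (N2_nonneg _))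
      rwa [sub_eq_zero] at this
    have : v - cc = q0 := by rw [← hvc]; abel
    rw [this]; exact hq0


set_option maxHeartbeats 1000000 in
lemma key (Λ : AddSubgroup (ℝ × ℝ)) (u w : ℝ × ℝ)
    (hu : u ∈ Λ) (hw : w ∈ Λ)
    (hrep : ∀ l ∈ Λ, ∃ m n : ℤ, m • u + n • w = l)
    (hA : 0 < N2 u) (hB : 0 < N2 w)
    (hp : dot2 u w < 0) (hpA : -2 * dot2 u w ≤ N2 u) (hpB : -2 * dot2 u w ≤ N2 w)
    (hD : cr u w ≠ 0) :
    ∀ x : ℝ × ℝ, ∃ d : ℝ,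
      IsGreatest (Set.range (torusDist Λ x)) d ∧
      ∃ y₁ y₂ : ℝ × ℝ, torusDist Λ x y₁ = d ∧ torusDist Λ x y₂ = d ∧
        y₁ - y₂ ∉ Λ ∧
        ∀ z : ℝ × ℝ, torusDist Λ x z = d → z - y₁ ∈ Λ ∨ z - y₂ ∈ Λ := by
  have h2D : (2 : ℝ) * cr u w ≠ 0 := by
    intro h; exact hD (by linarith [h])
  -- the circumcenter of the triangle (0, u, u+w)
  set c : ℝ × ℝ := ((N2 u * w.2 - (N2 w + 2 * dot2 u w) * u.2) / (2 * cr u w),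
    ((N2 w + 2 * dot2 u w) * u.1 - N2 u * w.1) / (2 * cr u w)) with hc
  have hc1 : 2 * dot2 c u = N2 u := by
    rw [hc]; simp only [dot2, N2, cr] at *
    field_simp
    ring
  have hc2 : 2 * dot2 c w = N2 w + 2 * dot2 u w := by
    rw [hc]; simp only [dot2, N2, cr] at *
    field_simp
    ring
  clear_value c
  clear hc
  set c' : ℝ × ℝ := u + w - c with hc'
  have hc1' : 2 * dot2 c' w = N2 w := by
    rw [hc']
    simp only [dot2, N2, Prod.fst_sub, Prod.snd_sub, Prod.fst_add, Prod.snd_add] at *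
    linear_combination (-1) * hc2
  have hc2' : 2 * dot2 c' u = N2 u + 2 * dot2 w u := by
    rw [hc']
    simp only [dot2, N2, Prod.fst_sub, Prod.snd_sub, Prod.fst_add, Prod.snd_add] at *
    linear_combination (-1) * hc1
  have hNcc' : N2 c' = N2 c := by
    rw [hc']
    simp only [dot2, N2, Prod.fst_sub, Prod.snd_sub, Prod.fst_add, Prod.snd_add] at *
    linear_combination (-1) * hc1 + (-1) * hc2
  -- all lattice points are at distance at least `enorm2 c` from `c`
  have far1 : ∀ l ∈ Λ, N2 c ≤ N2 (c - l) := by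
    intro l hl
    obtain ⟨m, n, hmn⟩ := hrep l hl
    rw [← hmn, zsmul_pair]
    have hE := intIneq hA hB hp hpA hpB m n
    have heq : N2 (c - (((m : ℝ) * u.1 + (n : ℝ) * w.1 : ℝ), ((m : ℝ) * u.2 + (n : ℝ) * w.2 : ℝ))) - N2 c
        = N2 u * m * ((m : ℝ) - 1) + N2 w * n * ((n : ℝ) - 1) + 2 * dot2 u w * n * ((m : ℝ) - 1)
          + (m : ℝ) * (N2 u - 2 * dot2 c u) + (n : ℝ) * (N2 w + 2 * dot2 u w - 2 * dot2 c w) := by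
      simp only [N2, dot2, Prod.fst_sub, Prod.snd_sub]
      ring
    rw [hc1, hc2] at heq


    linarith [hE, heq]
  -- the reflected circumcenter is also at distance `enorm2 c` from the lattice
  have far1' : ∀ l ∈ Λ, N2 c ≤ N2 (c' - l) := by
    intro l hl
    have hmem : u + w - l ∈ Λ := sub_mem (add_mem hu hw) hl
    have h := far1 _ hmem
    have hne : c' - l = -(c - (u + w - l)) := by rw [hc']; abel
    rw [hne, N2_neg]
    exact h
  set d : ℝ := enorm2 c with hd
  have hd0 : 0 ≤ d := enorm2_nonneg c
  have hdc' : enorm2 c' = d := by rw [hd, enorm2_eq, enorm2_eq, hNcc']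
  have gdc : gd Λ c = d := by
    refine le_antisymm ?_ (le_gd fun l hl => enorm2_le_enorm2 (far1 l hl))
    simpa using gd_le (zero_mem Λ) c
  have gdc' : gd Λ c' = d := by
    refine le_antisymm ?_ (le_gd fun l hl => enorm2_le_enorm2 (far1' l hl))
    have := gd_le (zero_mem Λ) c'
    rw [sub_zero, hdc'] at this
    exact this
  -- every point is within distance d, with equality only at c or c' mod Λ
  have cover : ∀ v : ℝ × ℝ, gd Λ v ≤ d ∧ (gd Λ v = d → v - c ∈ Λ ∨ v - c' ∈ Λ) := by
    intro v
    set s : ℝ := cr v w / cr u w with hsdef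
    set t : ℝ := cr u v / cr u w with htdef
    have hDne : u.1 * w.2 - u.2 * w.1 ≠ 0 := by simpa [cr] using hD
    have hv1 : v.1 = s * u.1 + t * w.1 := by
      rw [hsdef, htdef]; simp only [cr]; rw [div_mul_eq_mul_div, div_mul_eq_mul_div, ← add_div, eq_div_iff hDne]; ring
    have hv2 : v.2 = s * u.2 + t * w.2 := by
      rw [hsdef, htdef]; simp only [cr]; rw [div_mul_eq_mul_div, div_mul_eq_mul_div, ← add_div, eq_div_iff hDne]; ring
    set m : ℤ := ⌊s⌋ with hm
    set n : ℤ := ⌊t⌋ with hn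
    set s' : ℝ := s - (m : ℝ) with hs'def
    set t' : ℝ := t - (n : ℝ) with ht'def
    have hs'0 : 0 ≤ s' := by rw [hs'def]; linarith [Int.floor_le s]
    have hs'1 : s' ≤ 1 := by rw [hs'def]; linarith [Int.lt_floor_add_one s]
    have ht'0 : 0 ≤ t' := by rw [ht'def]; linarith [Int.floor_le t]
    have ht'1 : t' ≤ 1 := by rw [ht'def]; linarith [Int.lt_floor_add_one t]
    set q0 : ℝ × ℝ := (((m : ℝ) * u.1 + (n : ℝ) * w.1 : ℝ), ((m : ℝ) * u.2 + (n : ℝ) * w.2 : ℝ)) with hq0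
    have hq0m : q0 ∈ Λ := by
      rw [hq0, ← zsmul_pair]; exact add_mem (zsmul_mem hu m) (zsmul_mem hw n)
    have hvq1 : v - q0 = (s' * u.1 + t' * w.1, s' * u.2 + t' * w.2) := by
      rw [hq0, hs'def, ht'def]
      refine Prod.ext ?_ ?_ <;>
        simp only [Prod.fst_sub, Prod.snd_sub] <;> [rw [hv1]; rw [hv2]] <;> ring
    rcases le_total t' s' with hts | hst
    · obtain ⟨hub, heqc⟩ := tri hu hw hc1 hc2 hq0m ht'0 hts hs'1 hvq1
      refine ⟨hub, fun hgd => Or.inl (heqc fun l hl => ?_)⟩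
      have := gd_le hl v
      rw [hgd] at this
      exact this
    · have hvq1' : v - q0 = (t' * w.1 + s' * u.1, t' * w.2 + s' * u.2) := by
        rw [hvq1]; simp only [Prod.mk.injEq]; constructor <;> ring
      obtain ⟨hub, heqc⟩ := tri hw hu hc1' hc2' hq0m hs'0 hst ht'1 hvq1'
      refine ⟨by rw [← hdc']; exact hub, fun hgd => Or.inr (heqc fun l hl => ?_)⟩
      have := gd_le hl v
      rw [hgd] at this
      rw [hdc']
      exact this
  -- the two circumcenters are distinct modulo the lattice
  have hcc' : c' - c ∉ Λ := by
    intro hmem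
    obtain ⟨m, n, hmn⟩ := hrep _ hmem
    rw [zsmul_pair] at hmn
    have h1 := congrArg Prod.fst hmn
    have h2 := congrArg Prod.snd hmn
    simp only [hc', Prod.fst_sub, Prod.snd_sub, Prod.fst_add, Prod.snd_add] at h1 h2
    have hc1u := hc1
    have hc2u := hc2
    simp only [N2, dot2] at hc1u hc2u
    have e1 : (m : ℝ) * N2 u + (n : ℝ) * dot2 u w = dot2 u w := by
      simp only [N2, dot2]
      linear_combination u.1 * h1 + u.2 * h2 - hc1u
    have e2 : (m : ℝ) * dot2 u w + (n : ℝ) * N2 w = -(dot2 u w) := by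
      simp only [N2, dot2]
      linear_combination w.1 * h1 + w.2 * h2 - hc2u
    -- bounds on m and n
    have habs1 : 2 * |(m : ℝ)| ≤ |1 - (n : ℝ)| := by
      have key : |(m : ℝ)| * N2 u = |dot2 u w| * |1 - (n : ℝ)| := by
        rw [← abs_mul, ← abs_of_pos hA, ← abs_mul]
        congr 1
        linarith [e1]
      have hple : |dot2 u w| ≤ N2 u / 2 := by
        rw [abs_of_neg hp]; linarith
      have : |(m : ℝ)| * N2 u ≤ (N2 u / 2) * |1 - (n : ℝ)| := by
        rw [key]
        exact mul_le_mul_of_nonneg_right hple (abs_nonneg _)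
      nlinarith [abs_nonneg ((m : ℝ)), abs_nonneg (1 - (n : ℝ))]
    have habs2 : 2 * |(n : ℝ)| ≤ |1 + (m : ℝ)| := by
      have key : |(n : ℝ)| * N2 w = |dot2 u w| * |1 + (m : ℝ)| := by
        rw [← abs_of_pos hB, ← abs_mul, ← abs_mul,
          show (n : ℝ) * N2 w = -(dot2 u w * (1 + (m : ℝ))) by linarith [e2]]
        exact abs_neg _
      have hple : |dot2 u w| ≤ N2 w / 2 := by
        rw [abs_of_neg hp]; linarith
      have : |(n : ℝ)| * N2 w ≤ (N2 w / 2) * |1 + (m : ℝ)| := by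
        rw [key]
        exact mul_le_mul_of_nonneg_right hple (abs_nonneg _)
      nlinarith [abs_nonneg ((n : ℝ)), abs_nonneg (1 + (m : ℝ))]
    have htri1 : |1 - (n : ℝ)| ≤ 1 + |(n : ℝ)| := by
      calc |1 - (n : ℝ)| ≤ |(1 : ℝ)| + |(n : ℝ)| := abs_sub _ _
        _ = 1 + |(n : ℝ)| := by rw [abs_one]
    have htri2 : |1 + (m : ℝ)| ≤ 1 + |(m : ℝ)| := by
      calc |1 + (m : ℝ)| ≤ |(1 : ℝ)| + |(m : ℝ)| := abs_add_le _ _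
        _ = 1 + |(m : ℝ)| := by rw [abs_one]
    have hmb : |(m : ℝ)| ≤ 3 / 2 := by linarith
    have hnb : |(n : ℝ)| ≤ 3 / 2 := by linarith
    have hma : -2 < m := by exact_mod_cast (show (-2 : ℝ) < (m : ℝ) by linarith [neg_abs_le ((m : ℝ))])
    have hmb2 : m < 2 := by exact_mod_cast (show ((m : ℝ)) < 2 by linarith [le_abs_self ((m : ℝ))])
    have hna : -2 < n := by exact_mod_cast (show (-2 : ℝ) < (n : ℝ) by linarith [neg_abs_le ((n : ℝ))])
    have hnb2 : n < 2 := by exact_mod_cast (show ((n : ℝ)) < 2 by linarith [le_abs_self ((n : ℝ))])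
    clear hmn h1 h2 habs1 habs2 hc1u hc2u
    interval_cases m <;> interval_cases n <;>
      (push_cast at e1 e2; linarith [hA, hB, hp, hpA, hpB])
  -- assemble the final statement
  intro x
  refine ⟨d, ⟨⟨x - c, ?_⟩, ?_⟩, x - c, x - c', ?_, ?_, ?_, ?_⟩
  · rw [torusDist_eq, show x - (x - c) = c by abel]; exact gdc
  · intro r hr
    obtain ⟨y, rfl⟩ := hr
    rw [torusDist_eq]
    exact (cover (x - y)).1
  · rw [torusDist_eq, show x - (x - c) = c by abel]; exact gdc
  · rw [torusDist_eq, show x - (x - c') = c' by abel]; exact gdc'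
  · rw [show (x - c) - (x - c') = c' - c by abel]; exact hcc'
  · intro z hz
    rw [torusDist_eq] at hz
    rcases (cover (x - z)).2 hz with h | h
    · left; rw [show z - (x - c) = -((x - z) - c) by abel]; exact neg_mem h
    · right; rw [show z - (x - c') = -((x - z) - c') by abel]; exact neg_mem h


lemma zsmul_fst (m : ℤ) (v : ℝ × ℝ) : (m • v).1 = (m : ℝ) * v.1 := by
  simp [Prod.smul_fst, zsmul_eq_mul]

lemma zsmul_snd (m : ℤ) (v : ℝ × ℝ) : (m • v).2 = (m : ℝ) * v.2 := by
  simp [Prod.smul_snd, zsmul_eq_mul]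

lemma finite_ball (a b : ℝ × ℝ) (hcr : cr a b ≠ 0) (r : ℝ) :
    {q : ℤ × ℤ | N2 (q.1 • a + q.2 • b) ≤ r}.Finite := by
  set ρ : ℝ := Real.sqrt (max r 0) with hρ
  have hρ0 : 0 ≤ ρ := Real.sqrt_nonneg _
  set K : ℝ := (ρ * (|a.1| + |a.2| + |b.1| + |b.2| + 1)) / |cr a b| with hK
  set M : ℤ := ⌈K⌉ with hM
  apply Set.Finite.subset (Set.finite_Icc ((-M, -M) : ℤ × ℤ) (M, M))
  rintro ⟨m, n⟩ hmn
  simp only [Set.mem_setOf_eq] at hmn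
  set v : ℝ × ℝ := m • a + n • b with hv
  have hN : N2 v = v.1 ^ 2 + v.2 ^ 2 := rfl
  have hv1 : |v.1| ≤ ρ := by
    have h1 : v.1 ^ 2 ≤ max r 0 := by nlinarith [sq_nonneg v.2, le_max_left r 0]
    calc |v.1| = Real.sqrt (v.1 ^ 2) := (Real.sqrt_sq_eq_abs _).symm
      _ ≤ ρ := Real.sqrt_le_sqrt h1
  have hv2 : |v.2| ≤ ρ := by
    have h1 : v.2 ^ 2 ≤ max r 0 := by nlinarith [sq_nonneg v.1, le_max_left r 0]
    calc |v.2| = Real.sqrt (v.2 ^ 2) := (Real.sqrt_sq_eq_abs _).symm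
      _ ≤ ρ := Real.sqrt_le_sqrt h1
  have habs : ∀ x y : ℝ × ℝ, |cr x y| ≤ |x.1| * |y.2| + |x.2| * |y.1| := by
    intro x y
    calc |cr x y| ≤ |x.1 * y.2| + |x.2 * y.1| := abs_sub _ _
      _ = |x.1| * |y.2| + |x.2| * |y.1| := by rw [abs_mul, abs_mul]
  have hcrpos : 0 < |cr a b| := abs_pos.2 hcr
  have hbm : |(m : ℝ)| ≤ K := by
    have hcram : (m : ℝ) * cr a b = cr v b := by
      simp only [cr, hv, zsmul_fst, zsmul_snd, Prod.fst_add, Prod.snd_add]; ring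
    have heq : |(m : ℝ)| * |cr a b| = |cr v b| := by rw [← abs_mul, hcram]
    have hb : |cr v b| ≤ ρ * (|a.1| + |a.2| + |b.1| + |b.2| + 1) := by
      have h2 := habs v b
      nlinarith [abs_nonneg b.1, abs_nonneg b.2, abs_nonneg a.1, abs_nonneg a.2,
        abs_nonneg v.1, abs_nonneg v.2,
        mul_le_mul_of_nonneg_right hv1 (abs_nonneg b.2),
        mul_le_mul_of_nonneg_right hv2 (abs_nonneg b.1)]
    rw [hK, le_div_iff₀ hcrpos]
    linarith [heq, hb]
  have hbn : |(n : ℝ)| ≤ K := by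
    have hcran : (n : ℝ) * cr a b = cr a v := by
      simp only [cr, hv, zsmul_fst, zsmul_snd, Prod.fst_add, Prod.snd_add]; ring
    have heq : |(n : ℝ)| * |cr a b| = |cr a v| := by rw [← abs_mul, hcran]
    have hb : |cr a v| ≤ ρ * (|a.1| + |a.2| + |b.1| + |b.2| + 1) := by
      have h2 := habs a v
      nlinarith [abs_nonneg b.1, abs_nonneg b.2, abs_nonneg a.1, abs_nonneg a.2,
        abs_nonneg v.1, abs_nonneg v.2,
        mul_le_mul_of_nonneg_right hv1 (abs_nonneg a.2),
        mul_le_mul_of_nonneg_right hv2 (abs_nonneg a.1)]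
    rw [hK, le_div_iff₀ hcrpos]
    linarith [heq, hb]
  have hKM : K ≤ (M : ℝ) := Int.le_ceil K
  have hm1 : m ≤ M := by exact_mod_cast (le_abs_self ((m : ℝ))).trans (hbm.trans hKM)
  have hm2 : -M ≤ m := by
    have : -(M : ℝ) ≤ (m : ℝ) := by linarith [neg_abs_le ((m : ℝ))]
    exact_mod_cast this
  have hn1 : n ≤ M := by exact_mod_cast (le_abs_self ((n : ℝ))).trans (hbn.trans hKM)
  have hn2 : -M ≤ n := by
    have : -(M : ℝ) ≤ (n : ℝ) := by linarith [neg_abs_le ((n : ℝ))]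
    exact_mod_cast this
  exact Set.mem_Icc.2 ⟨⟨hm2, hn2⟩, ⟨hm1, hn1⟩⟩

lemma exists_min (a b : ℝ × ℝ) (hcr : cr a b ≠ 0) (S : Set (ℤ × ℤ))
    (q1 : ℤ × ℤ) (hq1 : q1 ∈ S) :
    ∃ q ∈ S, ∀ q' ∈ S, N2 (q.1 • a + q.2 • b) ≤ N2 (q'.1 • a + q'.2 • b) := by
  set f : ℤ × ℤ → ℝ := fun q => N2 (q.1 • a + q.2 • b) with hf
  set r : ℝ := f q1 with hr
  have hfin : (S ∩ {q | f q ≤ r}).Finite :=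
    (finite_ball a b hcr r).subset Set.inter_subset_right
  obtain ⟨q, hq, hmin⟩ := Set.exists_min_image _ f hfin ⟨q1, hq1, show f q1 ≤ r from le_rfl⟩
  refine ⟨q, hq.1, fun q' hq' => ?_⟩
  rcases le_or_gt (f q') r with h | h
  · exact hmin q' ⟨hq', show f q' ≤ r from h⟩
  · exact (hmin q1 ⟨hq1, show f q1 ≤ r from le_rfl⟩).trans h.le

end TorusFar

open TorusFar in
set_option maxHeartbeats 1000000 in
/-- On a flat torus `ℝ²/Λ` whose fundamental domain is a non-rectangular parallelogram
(i.e. `Λ` is a lattice admitting no orthogonal generating pair), for every point `x`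
the set of points at maximal distance from `x` consists of exactly two points of the
torus. -/
theorem nonrectangular_torus_two_farthest
    (a b : ℝ × ℝ) (hind : LinearIndependent ℝ ![a, b])
    (Λ : AddSubgroup (ℝ × ℝ)) (hΛ : Λ = AddSubgroup.closure {a, b})
    (hnonrect : ¬ ∃ a' b' : ℝ × ℝ, dot2 a' b' = 0 ∧
      Λ = AddSubgroup.closure {a', b'}) :
    ∀ x : ℝ × ℝ, ∃ d : ℝ,
      IsGreatest (Set.range (torusDist Λ x)) d ∧
      ∃ y₁ y₂ : ℝ × ℝ, torusDist Λ x y₁ = d ∧ torusDist Λ x y₂ = d ∧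
        y₁ - y₂ ∉ Λ ∧
        ∀ z : ℝ × ℝ, torusDist Λ x z = d → z - y₁ ∈ Λ ∨ z - y₂ ∈ Λ := by
  rw [LinearIndependent.pair_iff] at hind
  -- linear independence gives a nonzero determinant
  have hcr : cr a b ≠ 0 := by
    intro h
    simp only [cr] at h
    have c1 := hind b.2 (-a.2) (by
      refine Prod.ext ?_ ?_ <;>
        simp only [Prod.smul_fst, Prod.smul_snd, smul_eq_mul, Prod.fst_add, Prod.snd_add,
          Prod.fst_zero, Prod.snd_zero] <;> [linear_combination h; ring])
    have c2 := hind b.1 (-a.1) (by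
      refine Prod.ext ?_ ?_ <;>
        simp only [Prod.smul_fst, Prod.smul_snd, smul_eq_mul, Prod.fst_add, Prod.snd_add,
          Prod.fst_zero, Prod.snd_zero] <;> [ring; linear_combination -h])
    have ha1 : a.1 = 0 := by linarith [c2.2]
    have ha2 : a.2 = 0 := by linarith [c1.2]
    have c3 := hind 1 0 (by
      refine Prod.ext ?_ ?_ <;>
        simp [Prod.smul_fst, Prod.smul_snd, ha1, ha2])
    exact one_ne_zero c3.1
  have hmemL : ∀ v : ℝ × ℝ, v ∈ Λ ↔ ∃ m n : ℤ, m • a + n • b = v := by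
    intro v
    rw [hΛ]
    exact AddSubgroup.mem_closure_pair
  have ha0 : a ≠ 0 := by
    intro h
    have c3 := hind 1 0 (by rw [h]; simp)
    exact one_ne_zero c3.1
  -- a shortest nonzero lattice vector u
  obtain ⟨qu, hqu, hmin_u⟩ := exists_min a b hcr {q : ℤ × ℤ | q.1 • a + q.2 • b ≠ 0}
    (1, 0) (by simp [ha0])
  set u : ℝ × ℝ := qu.1 • a + qu.2 • b with hu_def
  have hu0 : u ≠ 0 := hqu
  have huL : u ∈ Λ := (hmemL u).2 ⟨qu.1, qu.2, rfl⟩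
  have humin : ∀ m n : ℤ, m • a + n • b ≠ 0 → N2 u ≤ N2 (m • a + n • b) :=
    fun m n h => hmin_u (m, n) h
  -- a shortest lattice vector not parallel to u
  have hexw : cr u a ≠ 0 ∨ cr u b ≠ 0 := by
    by_contra hcon
    push_neg at hcon
    obtain ⟨h1, h2⟩ := hcon
    have ident1 : u.1 * cr a b = a.1 * cr u b - b.1 * cr u a := by simp only [cr]; ring
    have ident2 : u.2 * cr a b = a.2 * cr u b - b.2 * cr u a := by simp only [cr]; ring
    rw [h1, h2] at ident1 ident2
    have hu1 : u.1 = 0 := by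
      rcases mul_eq_zero.1 (by linarith [ident1] : u.1 * cr a b = 0) with h | h
      · exact h
      · exact absurd h hcr
    have hu2 : u.2 = 0 := by
      rcases mul_eq_zero.1 (by linarith [ident2] : u.2 * cr a b = 0) with h | h
      · exact h
      · exact absurd h hcr
    exact hu0 (Prod.ext hu1 hu2)
  have hwit : ∃ q1 : ℤ × ℤ, cr u (q1.1 • a + q1.2 • b) ≠ 0 := by
    rcases hexw with h | h
    · exact ⟨(1, 0), by simpa using h⟩
    · exact ⟨(0, 1), by simpa using h⟩
  obtain ⟨q1, hq1⟩ := hwit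
  obtain ⟨qw, hqw, hmin_w⟩ := exists_min a b hcr {q : ℤ × ℤ | cr u (q.1 • a + q.2 • b) ≠ 0}
    q1 hq1
  set w : ℝ × ℝ := qw.1 • a + qw.2 • b with hw_def
  have hwcr : cr u w ≠ 0 := hqw
  have hwmin : ∀ m n : ℤ, cr u (m • a + n • b) ≠ 0 → N2 w ≤ N2 (m • a + n • b) :=
    fun m n h => hmin_w (m, n) h
  have hw0 : w ≠ 0 := by
    intro h
    apply hwcr
    rw [h]
    simp [cr]
  have hwL : w ∈ Λ := (hmemL w).2 ⟨qw.1, qw.2, rfl⟩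
  have hA : 0 < N2 u := N2_pos hu0
  have hB : 0 < N2 w := N2_pos hw0
  have hAB : N2 u ≤ N2 w := humin qw.1 qw.2 (by rw [← hw_def]; exact hw0)
  -- reduction inequalities
  have hcomb : ∀ e : ℤ, (qw.1 + e * qu.1) • a + (qw.2 + e * qu.2) • b = w + e • u := by
    intro e
    refine Prod.ext ?_ ?_ <;>
      simp only [zsmul_fst, zsmul_snd, Prod.fst_add, Prod.snd_add, hu_def, hw_def] <;>
      push_cast <;> ring
  have hcru : ∀ e : ℤ, cr u (w + e • u) = cr u w := by
    intro e
    simp only [cr, Prod.fst_add, Prod.snd_add, zsmul_fst, zsmul_snd]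
    ring
  have hNwu : ∀ e : ℤ, N2 (w + e • u) = N2 w + 2 * (e : ℝ) * dot2 u w + (e : ℝ) ^ 2 * N2 u := by
    intro e
    simp only [N2, dot2, Prod.fst_add, Prod.snd_add, zsmul_fst, zsmul_snd]
    ring
  have hredp : N2 w ≤ N2 (w + (1 : ℤ) • u) := by
    have := hwmin (qw.1 + 1 * qu.1) (qw.2 + 1 * qu.2) (by rw [hcomb 1, hcru 1]; exact hwcr)
    rwa [hcomb 1] at this
  have hredm : N2 w ≤ N2 (w + (-1 : ℤ) • u) := by
    have := hwmin (qw.1 + (-1) * qu.1) (qw.2 + (-1) * qu.2)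
      (by rw [hcomb (-1), hcru (-1)]; exact hwcr)
    rwa [hcomb (-1)] at this
  have hred1 : -2 * dot2 u w ≤ N2 u := by
    have he := hNwu 1
    push_cast at he
    rw [he] at hredp
    linarith
  have hred2 : 2 * dot2 u w ≤ N2 u := by
    have he := hNwu (-1)
    push_cast at he
    rw [he] at hredm
    linarith
  -- (u, w) is a basis of the lattice
  have hDne : u.1 * w.2 - u.2 * w.1 ≠ 0 := by simpa [cr] using hwcr
  have hrep : ∀ l ∈ Λ, ∃ m n : ℤ, m • u + n • w = l := by
    intro l hl
    obtain ⟨m0, n0, hl0⟩ := (hmemL l).1 hl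
    set s : ℝ := cr l w / cr u w with hsdef
    set t : ℝ := cr u l / cr u w with htdef
    have hl1 : l.1 = s * u.1 + t * w.1 := by
      rw [hsdef, htdef]; simp only [cr]; rw [div_mul_eq_mul_div, div_mul_eq_mul_div, ← add_div, eq_div_iff hDne]; ring
    have hl2 : l.2 = s * u.2 + t * w.2 := by
      rw [hsdef, htdef]; simp only [cr]; rw [div_mul_eq_mul_div, div_mul_eq_mul_div, ← add_div, eq_div_iff hDne]; ring
    set mr : ℤ := round s with hmr
    set nr : ℤ := round t with hnr
    set s' : ℝ := s - (mr : ℝ) with hs'def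
    set t' : ℝ := t - (nr : ℝ) with ht'def
    have hs'b : |s'| ≤ 1 / 2 := by rw [hs'def, hmr]; exact abs_sub_round s
    have ht'b : |t'| ≤ 1 / 2 := by rw [ht'def, hnr]; exact abs_sub_round t
    have hs'sq : s' ^ 2 ≤ 1 / 4 := by
      have h1 := abs_le.1 hs'b
      nlinarith [h1.1, h1.2]
    have ht'sq : t' ^ 2 ≤ 1 / 4 := by
      have h1 := abs_le.1 ht'b
      nlinarith [h1.1, h1.2]
    set l' : ℝ × ℝ := l - mr • u - nr • w with hl'def
    have hl'1 : l'.1 = s' * u.1 + t' * w.1 := by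
      rw [hl'def]
      simp only [Prod.fst_sub, zsmul_fst, hs'def, ht'def]
      rw [hl1]; ring
    have hl'2 : l'.2 = s' * u.2 + t' * w.2 := by
      rw [hl'def]
      simp only [Prod.snd_sub, zsmul_snd, hs'def, ht'def]
      rw [hl2]; ring
    have hl'comb : (m0 - mr * qu.1 - nr * qw.1) • a + (n0 - mr * qu.2 - nr * qw.2) • b = l' := by
      rw [hl'def, ← hl0]
      refine Prod.ext ?_ ?_ <;>
        simp only [zsmul_fst, zsmul_snd, Prod.fst_add, Prod.snd_add, Prod.fst_sub,
          Prod.snd_sub, hu_def, hw_def] <;>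
        push_cast <;> ring
    have hNl' : N2 l' = s' ^ 2 * N2 u + 2 * s' * t' * dot2 u w + t' ^ 2 * N2 w := by
      simp only [N2, dot2]
      rw [hl'1, hl'2]
      ring
    have hcrl' : cr u l' = t' * cr u w := by
      simp only [cr]
      rw [hl'1, hl'2]
      ring
    rcases eq_or_ne t' 0 with ht0 | ht0
    · -- l' is a multiple of u, hence zero
      have hl'0 : l' = 0 := by
        by_contra hne
        have h1 : N2 u ≤ N2 l' := by
          have := humin (m0 - mr * qu.1 - nr * qw.1) (n0 - mr * qu.2 - nr * qw.2)
            (by rw [hl'comb]; exact hne)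
          rwa [hl'comb] at this
        rw [hNl', ht0] at h1
        have hstep : s' ^ 2 * N2 u ≤ 1 / 4 * N2 u := mul_le_mul_of_nonneg_right hs'sq hA.le
        have hfin : N2 u ≤ 1 / 4 * N2 u := by
          calc N2 u ≤ s' ^ 2 * N2 u + 2 * s' * 0 * dot2 u w + 0 ^ 2 * N2 w := h1
            _ = s' ^ 2 * N2 u := by ring
            _ ≤ 1 / 4 * N2 u := hstep
        linarith only [hfin, hA]
      refine ⟨mr, nr, ?_⟩
      have h0 : l - mr • u - nr • w = 0 := hl'0
      rw [sub_sub, sub_eq_zero] at h0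
      exact h0.symm
    · -- l' is not parallel to u : contradiction with minimality of w
      exfalso
      have h1 : N2 w ≤ N2 l' := by
        have := hwmin (m0 - mr * qu.1 - nr * qw.1) (n0 - mr * qu.2 - nr * qw.2)
          (by rw [hl'comb, hcrl']; exact mul_ne_zero ht0 hwcr)
        rwa [hl'comb] at this
      have hpabs : |dot2 u w| ≤ N2 u / 2 := abs_le.2 ⟨by linarith, by linarith⟩
      have h2stp : 2 * s' * t' * dot2 u w ≤ N2 u / 4 := by
        calc 2 * s' * t' * dot2 u w ≤ |2 * s' * t' * dot2 u w| := le_abs_self _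
          _ = 2 * (|s'| * (|t'| * |dot2 u w|)) := by
              rw [abs_mul, abs_mul, abs_mul, abs_two]; ring
          _ ≤ 2 * ((1 / 2) * ((1 / 2) * (N2 u / 2))) := by gcongr
          _ = N2 u / 4 := by ring
      rw [hNl'] at h1
      have hstep1 : s' ^ 2 * N2 u ≤ 1 / 4 * N2 u := mul_le_mul_of_nonneg_right hs'sq hA.le
      have hstep2 : t' ^ 2 * N2 w ≤ 1 / 4 * N2 w := mul_le_mul_of_nonneg_right ht'sq hB.le
      have hfin : N2 w ≤ 1 / 4 * N2 u + N2 u / 4 + 1 / 4 * N2 w := by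
        calc N2 w ≤ s' ^ 2 * N2 u + 2 * s' * t' * dot2 u w + t' ^ 2 * N2 w := h1
          _ ≤ 1 / 4 * N2 u + N2 u / 4 + 1 / 4 * N2 w := by linarith only [hstep1, hstep2, h2stp]
      linarith only [hfin, hA, hB, hAB]
  -- the lattice is generated by u and w, so their inner product is nonzero
  have hclos : Λ = AddSubgroup.closure {u, w} := by
    apply le_antisymm
    · intro l hl
      obtain ⟨m, n, hmn⟩ := hrep l hl
      exact AddSubgroup.mem_closure_pair.2 ⟨m, n, hmn⟩
    · rw [AddSubgroup.closure_le]
      rintro x hx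
      simp only [Set.mem_insert_iff, Set.mem_singleton_iff] at hx
      rcases hx with rfl | rfl
      · exact huL
      · exact hwL
  have hpne : dot2 u w ≠ 0 := fun h => hnonrect ⟨u, w, h, hclos⟩
  rcases lt_or_gt_of_ne hpne with hneg | hpos
  · exact key Λ u w huL hwL hrep hA hB hneg hred1 (le_trans hred1 hAB) hwcr
  · -- flip the sign of w
    have hrep' : ∀ l ∈ Λ, ∃ m n : ℤ, m • u + n • (-w) = l := by
      intro l hl
      obtain ⟨m, n, hmn⟩ := hrep l hl
      refine ⟨m, -n, ?_⟩
      rw [neg_zsmul, smul_neg, neg_neg]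
      exact hmn
    have hB' : 0 < N2 (-w) := by rw [N2_neg]; exact hB
    have hdotneg : dot2 u (-w) = -dot2 u w := by
      simp only [dot2, Prod.fst_neg, Prod.snd_neg]; ring
    have hcrneg : cr u (-w) ≠ 0 := by
      simp only [cr, Prod.fst_neg, Prod.snd_neg]
      intro h
      apply hwcr
      simp only [cr]
      linarith
    apply key Λ u (-w) huL (neg_mem hwL) hrep' hA hB'
    · rw [hdotneg]; linarith
    · rw [hdotneg]; linarith
    · rw [hdotneg, N2_neg]; linarith
    · exact hcrneg
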